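/- Let X be a Delone set in ℝ^d for which there exists a finite set F ⊆ ℝ^d with X − X ⊆ X + F. Then the additive subgroup [X] generated by X is finitely generated, and for every free ℤ-basis v₁,…,v_s of [X] with associated address map φ : [X] → ℤ^s, the map φ is almost linear on X: there exist a linear map L : ℝ^d → ℝ^s and a constant C > 0 such that ‖φ(x) − L x‖ ≤ C for all x ∈ X. -/

import Mathlib

open scoped Pointwise

noncomputable section


open scoped Pointwise

noncomputable section

/-- `X` is uniformly discrete with parameter `r`: distinct points are at distance `≥ 2r`. -/
def UnifDiscrete {d : ℕ} (X : Set (EuclideanSpace ℝ (Fin d))) (r : ℝ) : Prop :=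
  ∀ x ∈ X, ∀ y ∈ X, x ≠ y → 2 * r ≤ dist x y

/-- `X` is relatively dense with parameter `R`: every closed ball of radius `R` meets `X`. -/
def RelDense {d : ℕ} (X : Set (EuclideanSpace ℝ (Fin d))) (R : ℝ) : Prop :=
  ∀ z : EuclideanSpace ℝ (Fin d), ∃ x ∈ X, dist z x ≤ R

/-- `X` is a Delone set. -/
def IsDelone {d : ℕ} (X : Set (EuclideanSpace ℝ (Fin d))) : Prop :=
  (∃ r > 0, UnifDiscrete X r) ∧ (∃ R > 0, RelDense X R)

/-- The address map associated to a free `ℤ`-basis of the subgroup `[X]` generated by `X`: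
it sends `Σᵢ nᵢ vᵢ` to the coordinate vector `(n₁,…,n_s)`, viewed in `ℝ^s`. -/
def address {d s : ℕ} {X : Set (EuclideanSpace ℝ (Fin d))}
    (b : Module.Basis (Fin s) ℤ (AddSubgroup.closure X)) (x : AddSubgroup.closure X) :
    EuclideanSpace ℝ (Fin s) := WithLp.toLp 2 (fun i => (b.repr x i : ℝ))


lemma finite_of_separated_aux {α : Type*} [MetricSpace α] [ProperSpace α] {s : Set α} {c : α}
    {ρ ε : ℝ} (hε : 0 < ε) (hb : s ⊆ Metric.closedBall c ρ)
    (hsep : ∀ x ∈ s, ∀ y ∈ s, x ≠ y → ε ≤ dist x y) : s.Finite := by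
  have htb : TotallyBounded s := (isCompact_closedBall c ρ).totallyBounded.subset hb
  obtain ⟨t, htf, hcov⟩ := Metric.totallyBounded_iff.1 htb (ε/2) (by positivity)
  have hmem : ∀ x : s, ∃ y : t, (x : α) ∈ Metric.ball (y : α) (ε/2) := by
    intro ⟨x, hx⟩
    have := hcov hx
    simp only [Set.mem_iUnion] at this
    obtain ⟨y, hy, hxy⟩ := this
    exact ⟨⟨y, hy⟩, hxy⟩
  choose f hf using hmem
  have : Finite t := htf
  have hinj : Function.Injective f := by
    intro x y hxy
    by_contra hne
    have hne' : (x : α) ≠ (y : α) := fun h => hne (Subtype.ext h)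
    have h1 := hf x
    have h2 := hf y
    rw [hxy] at h1
    have : dist (x : α) (y : α) < ε := by
      calc dist (x:α) (y:α) ≤ dist (x:α) (f y : α) + dist (f y : α) (y:α) := dist_triangle _ _ _
        _ < ε/2 + ε/2 := by
              rw [Metric.mem_ball] at h1 h2
              rw [dist_comm (f y : α)]
              exact add_lt_add h1 h2
        _ = ε := by ring
    exact absurd (hsep _ x.2 _ y.2 hne') (not_le.2 this)
  have : Finite s := Finite.of_injective f hinj
  exact Set.toFinite s

open Filter Topology in
set_option maxHeartbeats 1000000 in
/-- If `X` is a Delone set with `X − X ⊆ X + F` for a finite set `F`, then the subgroup `[X]`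
generated by `X` is finitely generated, and every address map is almost linear on `X`. -/
theorem meyer_address_almost_linear {d : ℕ} (X : Set (EuclideanSpace ℝ (Fin d)))
    (hX : IsDelone X) (F : Set (EuclideanSpace ℝ (Fin d))) (hF : F.Finite)
    (hXF : X - X ⊆ X + F) :
    (AddSubgroup.closure X).FG ∧
    ∀ (s : ℕ) (b : Module.Basis (Fin s) ℤ (AddSubgroup.closure X)),
      ∃ (L : EuclideanSpace ℝ (Fin d) →ₗ[ℝ] EuclideanSpace ℝ (Fin s)) (C : ℝ), 0 < C ∧
        ∀ x (hx : x ∈ X),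
          ‖address b ⟨x, AddSubgroup.subset_closure hx⟩ - L x‖ ≤ C := by
  classical
  obtain ⟨⟨r, hr, hdisc'⟩, ⟨R, hR, hdense'⟩⟩ := hX
  have hdisc : ∀ x ∈ X, ∀ y ∈ X, x ≠ y → 2*r ≤ dist x y := hdisc'
  have hdense : ∀ z : EuclideanSpace ℝ (Fin d), ∃ x ∈ X, dist z x ≤ R := hdense'
  obtain ⟨M, hM0, hMF⟩ : ∃ M, 0 ≤ M ∧ ∀ f ∈ F, ‖f‖ ≤ M := by
    obtain ⟨M0, hM0⟩ := (hF.image (fun f => ‖f‖)).bddAbove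
    exact ⟨max M0 0, le_max_right _ _, fun f hf =>
      le_trans (hM0 (Set.mem_image_of_mem _ hf)) (le_max_left _ _)⟩
  set c := R + M with hcdef
  have hc0 : 0 < c := by positivity
  -- decomposition lemma: every point of X splits as y + z + f with y, z of roughly half norm
  have hdecomp : ∀ x ∈ X, ∃ y ∈ X, ∃ z ∈ X, ∃ f ∈ F,
      x = y + z + f ∧ ‖y‖ ≤ ‖x‖/2 + c ∧ ‖z‖ ≤ ‖x‖/2 + c := by
    intro x hx
    obtain ⟨y, hy, hdy⟩ := hdense ((2⁻¹ : ℝ) • x)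
    have hdy' : ‖(2⁻¹ : ℝ) • x - y‖ ≤ R := by rwa [dist_eq_norm] at hdy
    have hxy : x - y ∈ X + F := hXF (Set.sub_mem_sub hx hy)
    obtain ⟨z, hz, f, hf', hzf⟩ := Set.mem_add.1 hxy
    have hhalf : ‖(2⁻¹:ℝ) • x‖ = ‖x‖ / 2 := by
      rw [norm_smul]
      simp [Real.norm_eq_abs]
      ring
    have hxyn : ‖x - y‖ ≤ ‖x‖/2 + R := by
      have hrw : x - y = (2⁻¹:ℝ) • x + ((2⁻¹:ℝ) • x - y) := by module
      calc ‖x - y‖ = ‖(2⁻¹:ℝ) • x + ((2⁻¹:ℝ) • x - y)‖ := by rw [← hrw]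
        _ ≤ ‖(2⁻¹:ℝ) • x‖ + ‖(2⁻¹:ℝ) • x - y‖ := norm_add_le _ _
        _ ≤ ‖x‖/2 + R := by rw [hhalf]; linarith
    refine ⟨y, hy, z, hz, f, hf', ?_, ?_, ?_⟩
    · have h1 : x = y + (z + f) := by rw [hzf]; abel
      rw [h1]; abel
    · have h2 : y = (2⁻¹:ℝ) • x - ((2⁻¹:ℝ) • x - y) := by abel
      calc ‖y‖ = ‖(2⁻¹:ℝ) • x - ((2⁻¹:ℝ) • x - y)‖ := by rw [← h2]
        _ ≤ ‖(2⁻¹:ℝ) • x‖ + ‖(2⁻¹:ℝ) • x - y‖ := norm_sub_le _ _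
        _ ≤ ‖x‖/2 + c := by rw [hhalf]; simp only [hcdef]; linarith
    · have hzeq : z = (x - y) - f := by rw [← hzf]; abel
      have := hMF f hf'
      calc ‖z‖ = ‖(x-y) - f‖ := by rw [hzeq]
        _ ≤ ‖x - y‖ + ‖f‖ := norm_sub_le _ _
        _ ≤ ‖x‖/2 + c := by simp only [hcdef]; linarith
  have hXG : ∀ x ∈ X, x ∈ AddSubgroup.closure X := fun x hx => AddSubgroup.subset_closure hx
  have hS₂fin : (X ∩ Metric.closedBall (0:EuclideanSpace ℝ (Fin d)) (2*c+2)).Finite :=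
    finite_of_separated_aux (mul_pos two_pos hr) Set.inter_subset_right
      (fun x hx y hy h => hdisc x hx.1 y hy.1 h)
  -- Part 1: finite generation
  have hfg : (AddSubgroup.closure X).FG := by
    set S₀ := X ∩ Metric.closedBall (0:EuclideanSpace ℝ (Fin d)) (2*c+2) with hS₀
    set F₀ := F ∩ (AddSubgroup.closure X : Set (EuclideanSpace ℝ (Fin d))) with hF₀
    have hF₀fin : F₀.Finite := hF.subset Set.inter_subset_left
    set H := AddSubgroup.closure (S₀ ∪ F₀) with hH
    have hXH : ∀ n : ℕ, ∀ x ∈ X, ‖x‖ ≤ n → x ∈ H := by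
      intro n
      induction n with
      | zero =>
        intro x hx hxn
        apply AddSubgroup.subset_closure
        left
        refine ⟨hx, ?_⟩
        rw [Metric.mem_closedBall, dist_zero_right]
        have h0 : ‖x‖ ≤ (0:ℝ) := by exact_mod_cast hxn
        linarith [norm_nonneg x]
      | succ n ih =>
        intro x hx hxn
        by_cases hsmall : ‖x‖ ≤ 2*c+2
        · exact AddSubgroup.subset_closure (Or.inl ⟨hx, by
            rw [Metric.mem_closedBall, dist_zero_right]; exact hsmall⟩)
        · push_neg at hsmall
          obtain ⟨y, hy, z, hz, f, hf', hxeq, hny, hnz⟩ := hdecomp x hx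
          have hxn' : ‖x‖ ≤ (n:ℝ) + 1 := by exact_mod_cast hxn
          have hn' : (2*c+2 : ℝ) < (n:ℝ)+1 := lt_of_lt_of_le hsmall hxn'
          have hyn : ‖y‖ ≤ (n:ℝ) := by linarith
          have hzn : ‖z‖ ≤ (n:ℝ) := by linarith
          have hyH := ih y hy hyn
          have hzH := ih z hz hzn
          have hfG : f ∈ AddSubgroup.closure X := by
            have hfe : f = x - y - z := by rw [hxeq]; abel
            rw [hfe]
            exact sub_mem (sub_mem (hXG x hx) (hXG y hy)) (hXG z hz)
          have hfH : f ∈ H := AddSubgroup.subset_closure (Or.inr ⟨hf', hfG⟩)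
          rw [hxeq]
          exact add_mem (add_mem hyH hzH) hfH
    rw [AddSubgroup.fg_iff]
    refine ⟨S₀ ∪ F₀, le_antisymm ?_ ?_, hS₂fin.union hF₀fin⟩
    · rw [AddSubgroup.closure_le]
      rintro x (hx | hx)
      · exact AddSubgroup.subset_closure hx.1
      · exact hx.2
    · rw [AddSubgroup.closure_le]
      intro x hx
      exact hXH ⌈‖x‖⌉₊ x hx (Nat.le_ceil _)
  refine ⟨hfg, ?_⟩
  intro s b
  -- Part 2: the address map, extended by 0 outside the group
  let Ψ : AddSubgroup.closure X →+ EuclideanSpace ℝ (Fin s) :=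
    { toFun := fun g => WithLp.toLp 2 (fun i => ((b.repr g) i : ℝ))
      map_zero' := by ext i; simp
      map_add' := by
        intro g h
        ext i
        simp [PiLp.add_apply] }
  let Φ : EuclideanSpace ℝ (Fin d) → EuclideanSpace ℝ (Fin s) :=
    fun x => if h : x ∈ AddSubgroup.closure X then Ψ ⟨x, h⟩ else 0
  have hΦadd : ∀ ⦃x y⦄, x ∈ AddSubgroup.closure X → y ∈ AddSubgroup.closure X →
      Φ (x + y) = Φ x + Φ y := by
    intro x y hx hy
    have hxy : x + y ∈ AddSubgroup.closure X := add_mem hx hy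
    simp only [Φ, dif_pos hx, dif_pos hy, dif_pos hxy]
    have h1 : (⟨x+y, hxy⟩ : AddSubgroup.closure X) = ⟨x,hx⟩ + ⟨y,hy⟩ := rfl
    rw [h1, map_add]
  have hΦsub : ∀ ⦃x y⦄, x ∈ AddSubgroup.closure X → y ∈ AddSubgroup.closure X →
      Φ (x - y) = Φ x - Φ y := by
    intro x y hx hy
    have hxy : x - y ∈ AddSubgroup.closure X := sub_mem hx hy
    simp only [Φ, dif_pos hx, dif_pos hy, dif_pos hxy]
    have h1 : (⟨x-y, hxy⟩ : AddSubgroup.closure X) = ⟨x,hx⟩ - ⟨y,hy⟩ := rfl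
    rw [h1, map_sub]
  have haddrΦ : ∀ (x : EuclideanSpace ℝ (Fin d)) (h : x ∈ AddSubgroup.closure X),
      address b ⟨x, h⟩ = Φ x := by
    intro x h
    simp only [Φ, dif_pos h]
    rfl
  clear_value Φ
  -- bounds on Φ over the base ball and over F
  obtain ⟨K₀, hK₀0, hK₀⟩ : ∃ K₀, 0 ≤ K₀ ∧ ∀ x ∈ X, ‖x‖ ≤ 2*c+2 → ‖Φ x‖ ≤ K₀ := by
    obtain ⟨K0, hK0⟩ := (hS₂fin.image (fun x => ‖Φ x‖)).bddAbove
    refine ⟨max K0 0, le_max_right _ _, fun x hx hxn => ?_⟩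
    refine le_trans (hK0 (Set.mem_image_of_mem _ ⟨hx, ?_⟩)) (le_max_left _ _)
    rw [Metric.mem_closedBall, dist_zero_right]
    exact hxn
  obtain ⟨k, hk0, hk⟩ : ∃ k, 0 ≤ k ∧ ∀ f ∈ F, ‖Φ f‖ ≤ k := by
    obtain ⟨k0, hkk⟩ := (hF.image (fun f => ‖Φ f‖)).bddAbove
    exact ⟨max k0 0, le_max_right _ _, fun f hf =>
      le_trans (hkk (Set.mem_image_of_mem _ hf)) (le_max_left _ _)⟩
  set α : ℝ := K₀ + k + 1 with hα
  have hα0 : 0 < α := by positivity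
  -- growth lemma: Φ grows at most linearly on X
  have hgrow : ∀ n : ℕ, ∀ x ∈ X, ‖x‖ ≤ n → ‖Φ x‖ ≤ α * max (‖x‖ - 2*c) 1 - k := by
    intro n
    induction n with
    | zero =>
      intro x hx hxn
      have h0 : ‖x‖ ≤ (0:ℝ) := by exact_mod_cast hxn
      have h1 := hK₀ x hx (by linarith [norm_nonneg x])
      have h2 : (1:ℝ) ≤ max (‖x‖ - 2*c) 1 := le_max_right _ _
      nlinarith
    | succ n ih =>
      intro x hx hxn
      by_cases hsmall : ‖x‖ ≤ 2*c+2
      · have h1 := hK₀ x hx hsmall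
        have h2 : (1:ℝ) ≤ max (‖x‖ - 2*c) 1 := le_max_right _ _
        nlinarith
      · push_neg at hsmall
        obtain ⟨y, hy, z, hz, f, hf', hxeq, hny, hnz⟩ := hdecomp x hx
        have hxn' : ‖x‖ ≤ (n:ℝ) + 1 := by exact_mod_cast hxn
        have hn' : (2*c+2 : ℝ) < (n:ℝ)+1 := lt_of_lt_of_le hsmall hxn'
        have hyn : ‖y‖ ≤ (n:ℝ) := by linarith
        have hzn : ‖z‖ ≤ (n:ℝ) := by linarith
        have hiy := ih y hy hyn
        have hiz := ih z hz hzn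
        have hfG : f ∈ AddSubgroup.closure X := by
          have hfe : f = x - y - z := by rw [hxeq]; abel
          rw [hfe]
          exact sub_mem (sub_mem (hXG x hx) (hXG y hy)) (hXG z hz)
        have hΦx : Φ x = Φ y + Φ z + Φ f := by
          rw [hxeq, hΦadd (add_mem (hXG y hy) (hXG z hz)) hfG, hΦadd (hXG y hy) (hXG z hz)]
        have hnΦ : ‖Φ x‖ ≤ ‖Φ y‖ + ‖Φ z‖ + ‖Φ f‖ := by
          rw [hΦx]
          exact norm_add₃_le
        have hmy : max (‖y‖ - 2*c) 1 ≤ (‖x‖ - 2*c)/2 := by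
          apply max_le <;> linarith
        have hmz : max (‖z‖ - 2*c) 1 ≤ (‖x‖ - 2*c)/2 := by
          apply max_le <;> linarith
        have hmx : max (‖x‖ - 2*c) 1 = ‖x‖ - 2*c := max_eq_left (by linarith)
        have hkf := hk f hf'
        rw [hmx]
        calc ‖Φ x‖ ≤ ‖Φ y‖ + ‖Φ z‖ + ‖Φ f‖ := hnΦ
          _ ≤ (α * max (‖y‖ - 2*c) 1 - k) + (α * max (‖z‖ - 2*c) 1 - k) + k :=
              add_le_add (add_le_add hiy hiz) hkf
          _ ≤ (α * ((‖x‖ - 2*c)/2) - k) + (α * ((‖x‖ - 2*c)/2) - k) + k :=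
              add_le_add (add_le_add
                (by linarith [mul_le_mul_of_nonneg_left hmy hα0.le])
                (by linarith [mul_le_mul_of_nonneg_left hmz hα0.le])) le_rfl
          _ = α * (‖x‖ - 2*c) - k := by ring
  have hlin : ∀ x ∈ X, ‖Φ x‖ ≤ α * (‖x‖ + 1) := by
    intro x hx
    have h1 := hgrow ⌈‖x‖⌉₊ x hx (Nat.le_ceil _)
    have h2 : max (‖x‖ - 2*c) 1 ≤ ‖x‖ + 1 :=
      max_le (by linarith) (by linarith [norm_nonneg x])
    have e1 : α * max (‖x‖ - 2*c) 1 ≤ α * (‖x‖ + 1) := mul_le_mul_of_nonneg_left h2 hα0.le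
    linarith
  -- three-point and two-point estimates
  have htriple : ∀ a ∈ X, ∀ b' ∈ X, ∀ c' ∈ X, ∀ ρ : ℝ, ‖a - b' - c'‖ ≤ ρ →
      ‖Φ a - Φ b' - Φ c'‖ ≤ α * (ρ + 2*M + 1) + 2*k := by
    intro a ha b' hb' c' hc' ρ hρ
    obtain ⟨z₁, hz₁, f₁, hf₁, he₁⟩ := Set.mem_add.1 (hXF (Set.sub_mem_sub ha hb'))
    obtain ⟨z₂, hz₂, f₂, hf₂, he₂⟩ := Set.mem_add.1 (hXF (Set.sub_mem_sub hz₁ hc'))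
    have hkey : a - b' - c' = z₂ + f₂ + f₁ := by
      calc a - b' - c' = (z₁ + f₁) - c' := by rw [he₁]
        _ = (z₁ - c') + f₁ := by abel
        _ = (z₂ + f₂) + f₁ := by rw [he₂]
    have hf₁G : f₁ ∈ AddSubgroup.closure X := by
      have : f₁ = a - b' - z₁ := by rw [← he₁]; abel
      rw [this]; exact sub_mem (sub_mem (hXG a ha) (hXG b' hb')) (hXG z₁ hz₁)
    have hf₂G : f₂ ∈ AddSubgroup.closure X := by
      have : f₂ = z₁ - c' - z₂ := by rw [← he₂]; abel
      rw [this]; exact sub_mem (sub_mem (hXG z₁ hz₁) (hXG c' hc')) (hXG z₂ hz₂)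
    have hz₂n : ‖z₂‖ ≤ ρ + 2*M := by
      have hze : z₂ = (a - b' - c') - f₂ - f₁ := by rw [hkey]; abel
      rw [hze]
      have h1 := hMF f₁ hf₁
      have h2 := hMF f₂ hf₂
      calc ‖a - b' - c' - f₂ - f₁‖ ≤ ‖a - b' - c' - f₂‖ + ‖f₁‖ := norm_sub_le _ _
        _ ≤ ‖a - b' - c'‖ + ‖f₂‖ + ‖f₁‖ := by linarith [norm_sub_le (a - b' - c') f₂]
        _ ≤ ρ + 2*M := by linarith
    have hΦeq : Φ a - Φ b' - Φ c' = Φ z₂ + Φ f₂ + Φ f₁ := by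
      rw [← hΦsub (hXG a ha) (hXG b' hb'), ← hΦsub (sub_mem (hXG a ha) (hXG b' hb')) (hXG c' hc')]
      rw [hkey, hΦadd (add_mem (hXG z₂ hz₂) hf₂G) hf₁G, hΦadd (hXG z₂ hz₂) hf₂G]
    have h1 := hlin z₂ hz₂
    have h2 := hk f₁ hf₁
    have h3 := hk f₂ hf₂
    have h4 : α * (‖z₂‖ + 1) ≤ α * (ρ + 2*M + 1) :=
      mul_le_mul_of_nonneg_left (by linarith) hα0.le
    calc ‖Φ a - Φ b' - Φ c'‖ = ‖Φ z₂ + Φ f₂ + Φ f₁‖ := by rw [hΦeq]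
      _ ≤ ‖Φ z₂‖ + ‖Φ f₂‖ + ‖Φ f₁‖ := norm_add₃_le
      _ ≤ α * (ρ + 2*M + 1) + 2*k := by linarith
  have hpair : ∀ a ∈ X, ∀ b' ∈ X, ∀ ρ : ℝ, ‖a - b'‖ ≤ ρ →
      ‖Φ a - Φ b'‖ ≤ α * (ρ + M + 1) + k := by
    intro a ha b' hb' ρ hρ
    obtain ⟨z₁, hz₁, f₁, hf₁, he₁⟩ := Set.mem_add.1 (hXF (Set.sub_mem_sub ha hb'))
    have hf₁G : f₁ ∈ AddSubgroup.closure X := by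
      have : f₁ = a - b' - z₁ := by rw [← he₁]; abel
      rw [this]; exact sub_mem (sub_mem (hXG a ha) (hXG b' hb')) (hXG z₁ hz₁)
    have hz₁n : ‖z₁‖ ≤ ρ + M := by
      have hze : z₁ = (a - b') - f₁ := by rw [← he₁]; abel
      rw [hze]
      have h1 := hMF f₁ hf₁
      calc ‖a - b' - f₁‖ ≤ ‖a - b'‖ + ‖f₁‖ := norm_sub_le _ _
        _ ≤ ρ + M := by linarith
    have hΦeq : Φ a - Φ b' = Φ z₁ + Φ f₁ := by
      rw [← hΦsub (hXG a ha) (hXG b' hb'), ← he₁, hΦadd (hXG z₁ hz₁) hf₁G]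
    have h1 := hlin z₁ hz₁
    have h2 := hk f₁ hf₁
    have h4 : α * (‖z₁‖ + 1) ≤ α * (ρ + M + 1) :=
      mul_le_mul_of_nonneg_left (by linarith) hα0.le
    calc ‖Φ a - Φ b'‖ = ‖Φ z₁ + Φ f₁‖ := by rw [hΦeq]
      _ ≤ ‖Φ z₁‖ + ‖Φ f₁‖ := norm_add_le _ _
      _ ≤ α * (ρ + M + 1) + k := by linarith
  -- construction of the linear map as a limit along dyadic scalings
  choose χ hχX hχd using hdense
  set K₃ : ℝ := α * (3*R + 2*M + 1) + 2*k with hK₃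
  have hK₃0 : 0 < K₃ := by positivity
  set u : EuclideanSpace ℝ (Fin d) → ℕ → EuclideanSpace ℝ (Fin s) :=
    fun t n => ((2:ℝ)^n)⁻¹ • Φ (χ (((2:ℝ)^n) • t)) with hu
  have hnear : ∀ (w : EuclideanSpace ℝ (Fin d)), ‖w - χ w‖ ≤ R := by
    intro w; rw [← dist_eq_norm]; exact hχd w
  have hkey3 : ∀ (a b' c' : EuclideanSpace ℝ (Fin d)),
      ‖Φ (χ a) - Φ (χ b') - Φ (χ c')‖ ≤ α * ((‖a - b' - c'‖ + 3*R) + 2*M + 1) + 2*k := by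
    intro a b' c'
    apply htriple _ (hχX a) _ (hχX b') _ (hχX c')
    have h1 := hnear a
    have h2 := hnear b'
    have h3 := hnear c'
    have hrw : χ a - χ b' - χ c' = (a - b' - c') - (a - χ a) + (b' - χ b') + (c' - χ c') := by
      abel
    rw [hrw]
    calc ‖a - b' - c' - (a - χ a) + (b' - χ b') + (c' - χ c')‖
        ≤ ‖a - b' - c' - (a - χ a) + (b' - χ b')‖ + ‖c' - χ c'‖ := norm_add_le _ _
      _ ≤ ‖a - b' - c' - (a - χ a)‖ + ‖b' - χ b'‖ + ‖c' - χ c'‖ := by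
            linarith [norm_add_le (a - b' - c' - (a - χ a)) (b' - χ b')]
      _ ≤ ‖a - b' - c'‖ + ‖a - χ a‖ + ‖b' - χ b'‖ + ‖c' - χ c'‖ := by
            linarith [norm_sub_le (a - b' - c') (a - χ a)]
      _ ≤ ‖a - b' - c'‖ + 3*R := by linarith
  have hstep : ∀ t n, dist (u t n) (u t (n+1)) ≤ K₃ / 2 / 2^n := by
    intro t n
    have h2 : ((2:ℝ)^(n+1)) • t - ((2:ℝ)^n) • t - ((2:ℝ)^n) • t = 0 := by
      have he : ((2:ℝ)^(n+1)) = (2:ℝ)^n + (2:ℝ)^n := by ring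
      rw [he, add_smul]; abel
    have h3 := hkey3 (((2:ℝ)^(n+1)) • t) (((2:ℝ)^n) • t) (((2:ℝ)^n) • t)
    rw [h2] at h3
    simp only [norm_zero, zero_add] at h3
    have hval : u t (n+1) - u t n =
        ((2:ℝ)^(n+1))⁻¹ • (Φ (χ (((2:ℝ)^(n+1)) • t)) - Φ (χ (((2:ℝ)^n) • t))
          - Φ (χ (((2:ℝ)^n) • t))) := by
      simp only [hu]
      have e1 : ((2:ℝ)^n)⁻¹ = ((2:ℝ)^(n+1))⁻¹ * 2 := by
        rw [pow_succ]
        field_simp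
      rw [e1, mul_smul, smul_sub, smul_sub, two_smul, smul_add]
      abel
    rw [dist_comm, dist_eq_norm, hval, norm_smul]
    have hpos : (0:ℝ) < (2:ℝ)^(n+1) := by positivity
    rw [Real.norm_eq_abs, abs_inv, abs_of_pos hpos]
    have hb : K₃ / 2 / 2^n = ((2:ℝ)^(n+1))⁻¹ * K₃ := by
      rw [pow_succ]
      ring
    rw [hb]
    exact mul_le_mul_of_nonneg_left (le_trans h3 (le_of_eq hK₃.symm)) (by positivity)
  have hconv : ∀ t, ∃ l, Tendsto (u t) atTop (𝓝 l) := fun t =>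
    cauchySeq_tendsto_of_complete (cauchySeq_of_le_geometric_two (hstep t))
  choose Λ hΛ using hconv
  have hu3 : ∀ (t w : EuclideanSpace ℝ (Fin d)) (n : ℕ),
      ‖u (t + w) n - u t n - u w n‖ ≤ K₃ * ((2:ℝ)⁻¹)^n := by
    intro t w n
    have h3 := hkey3 (((2:ℝ)^n) • (t + w)) (((2:ℝ)^n) • t) (((2:ℝ)^n) • w)
    have h0 : ((2:ℝ)^n) • (t + w) - ((2:ℝ)^n) • t - ((2:ℝ)^n) • w = 0 := by
      rw [smul_add]; abel
    rw [h0] at h3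
    simp only [norm_zero, zero_add] at h3
    have hval : u (t + w) n - u t n - u w n =
        ((2:ℝ)^n)⁻¹ • (Φ (χ (((2:ℝ)^n) • (t + w))) - Φ (χ (((2:ℝ)^n) • t))
          - Φ (χ (((2:ℝ)^n) • w))) := by
      simp only [hu, smul_sub]
    rw [hval, norm_smul, Real.norm_eq_abs, abs_inv, abs_of_pos (by positivity : (0:ℝ) < 2^n),
      inv_pow, mul_comm]
    exact mul_le_mul_of_nonneg_right (le_trans h3 (le_of_eq hK₃.symm)) (by positivity)
  have htend0 : Tendsto (fun n : ℕ => K₃ * ((2:ℝ)⁻¹)^n) atTop (𝓝 0) := by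
    have := tendsto_pow_atTop_nhds_zero_of_lt_one (by norm_num : (0:ℝ) ≤ 2⁻¹)
      (by norm_num : (2:ℝ)⁻¹ < 1)
    simpa using this.const_mul K₃
  have hΛadd : ∀ t w, Λ (t + w) = Λ t + Λ w := by
    intro t w
    have h1 : Tendsto (fun n => u (t+w) n - u t n - u w n) atTop
        (𝓝 (Λ (t+w) - Λ t - Λ w)) := ((hΛ (t+w)).sub (hΛ t)).sub (hΛ w)
    have h2 : Tendsto (fun n => u (t+w) n - u t n - u w n) atTop (𝓝 0) :=
      squeeze_zero_norm (hu3 t w) htend0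
    have h3 := tendsto_nhds_unique h1 h2
    have h4 : Λ (t+w) - Λ t - Λ w = 0 := h3
    have h5 := sub_eq_zero.1 (by rw [sub_sub] at h4; exact h4)
    rw [h5]
  have hΛle : ∀ t, ‖Λ t‖ ≤ α * ‖t‖ := by
    intro t
    have h1 : Tendsto (fun n => ‖u t n‖) atTop (𝓝 ‖Λ t‖) := (hΛ t).norm
    have h2 : Tendsto (fun n : ℕ => α * ‖t‖ + (α * (R + 1)) * ((2:ℝ)⁻¹)^n) atTop
        (𝓝 (α * ‖t‖)) := by
      have h5 := tendsto_pow_atTop_nhds_zero_of_lt_one (by norm_num : (0:ℝ) ≤ 2⁻¹)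
        (by norm_num : (2:ℝ)⁻¹ < 1)
      have h6 := (h5.const_mul (α * (R + 1))).const_add (α * ‖t‖)
      simpa using h6
    apply le_of_tendsto_of_tendsto' h1 h2
    intro n
    have hpos : (0:ℝ) < 2^n := by positivity
    have hn1 : ‖χ (((2:ℝ)^n) • t)‖ ≤ (2:ℝ)^n * ‖t‖ + R := by
      have := hnear (((2:ℝ)^n) • t)
      have h7 : ‖χ (((2:ℝ)^n) • t)‖ ≤ ‖((2:ℝ)^n) • t‖ + ‖((2:ℝ)^n) • t - χ (((2:ℝ)^n) • t)‖ := by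
        calc ‖χ (((2:ℝ)^n) • t)‖
            = ‖((2:ℝ)^n) • t - (((2:ℝ)^n) • t - χ (((2:ℝ)^n) • t))‖ := by
              congr 1; abel
          _ ≤ _ := norm_sub_le _ _
      rw [norm_smul, Real.norm_eq_abs, abs_of_pos hpos] at h7
      linarith
    have h8 := hlin _ (hχX (((2:ℝ)^n) • t))
    have h9 : ‖u t n‖ = ((2:ℝ)^n)⁻¹ * ‖Φ (χ (((2:ℝ)^n) • t))‖ := by
      simp only [hu]
      rw [norm_smul, Real.norm_eq_abs, abs_inv, abs_of_pos hpos]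
    rw [h9]
    have h10 : ‖Φ (χ (((2:ℝ)^n) • t))‖ ≤ α * ((2:ℝ)^n * ‖t‖ + R + 1) := by
      calc ‖Φ (χ (((2:ℝ)^n) • t))‖ ≤ α * (‖χ (((2:ℝ)^n) • t)‖ + 1) := h8
        _ ≤ α * ((2:ℝ)^n * ‖t‖ + R + 1) := by
            apply mul_le_mul_of_nonneg_left _ hα0.le
            linarith
    calc ((2:ℝ)^n)⁻¹ * ‖Φ (χ (((2:ℝ)^n) • t))‖
        ≤ ((2:ℝ)^n)⁻¹ * (α * ((2:ℝ)^n * ‖t‖ + R + 1)) :=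
          mul_le_mul_of_nonneg_left h10 (by positivity)
      _ = α * ‖t‖ + (α * (R + 1)) * ((2:ℝ)⁻¹)^n := by
          rw [inv_pow]
          field_simp
          ring
  set Λhom : EuclideanSpace ℝ (Fin d) →+ EuclideanSpace ℝ (Fin s) :=
    AddMonoidHom.mk' Λ hΛadd with hΛhom
  have hΛsub : ∀ t w, Λ (t - w) = Λ t - Λ w := fun t w => map_sub Λhom t w
  have hlip : LipschitzWith (Real.toNNReal α) Λ := by
    apply LipschitzWith.of_dist_le_mul
    intro t w
    rw [dist_eq_norm, dist_eq_norm, ← hΛsub]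
    calc ‖Λ (t - w)‖ ≤ α * ‖t - w‖ := hΛle _
      _ = (Real.toNNReal α : ℝ) * ‖t - w‖ := by rw [Real.coe_toNNReal _ hα0.le]
  have hcont : Continuous Λ := hlip.continuous
  set L0 := Λhom.toRealLinearMap hcont with hL0
  refine ⟨L0.toLinearMap, α * (R + M + 1) + k + K₃ + 1, by positivity, ?_⟩
  intro x hx
  have haddr : address b ⟨x, AddSubgroup.subset_closure hx⟩ = Φ x :=
    haddrΦ x (AddSubgroup.subset_closure hx)
  have hLx : L0.toLinearMap x = Λ x := rfl
  rw [haddr, hLx]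
  have hu0 : u x 0 = Φ (χ x) := by
    simp only [hu]
    norm_num
  have hd1 : ‖Φ x - Φ (χ x)‖ ≤ α * (R + M + 1) + k := by
    apply hpair x hx _ (hχX x)
    rw [← dist_eq_norm]
    exact hχd x
  have hd2 : dist (u x 0) (Λ x) ≤ K₃ :=
    dist_le_of_le_geometric_two_of_tendsto₀ (hstep x) (hΛ x)
  rw [hu0, dist_eq_norm] at hd2
  calc ‖Φ x - Λ x‖ = ‖(Φ x - Φ (χ x)) + (Φ (χ x) - Λ x)‖ := by congr 1; abel
    _ ≤ ‖Φ x - Φ (χ x)‖ + ‖Φ (χ x) - Λ x‖ := norm_add_le _ _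
    _ ≤ (α * (R + M + 1) + k) + K₃ := add_le_add hd1 hd2
    _ ≤ α * (R + M + 1) + k + K₃ + 1 := by linarith
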